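/- Let p00, p11 ∈ [0,1] with p00 + p11 ≤ 1, and let N00, N01, N10, N11 be nonnegative integers. Define L(p00,p11) = (1−p11)^N00 · p11^N01 · p00^N10 · (1−p00)^N11. If N00·N11 ≥ N01·N10 and all the denominators below are positive, then L is maximized over the region {(p00,p11) : p00 ≥ 0, p11 ≥ 0, p00 + p11 ≤ 1} at p00 = N10/(N10+N11) and p11 = N01/(N00+N01). -/

import Mathlib

lemma bern_max (a b : ℕ) (p : ℝ) (hp : 0 ≤ p) (hp1 : p ≤ 1) :
    (1 - p) ^ a * p ^ b ≤ ((a : ℝ) / (a + b)) ^ a * ((b : ℝ) / (a + b)) ^ b := by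
  have h1p : (0:ℝ) ≤ 1 - p := by linarith
  rcases Nat.eq_zero_or_pos a with ha | ha
  · subst ha
    simp only [Nat.cast_zero, zero_add, pow_zero, one_mul]
    rcases Nat.eq_zero_or_pos b with hb | hb
    · subst hb; simp
    · have : ((b:ℝ)/(b:ℝ)) = 1 := by
        rw [div_self]; positivity
      rw [this, one_pow]
      exact pow_le_one₀ hp hp1
  rcases Nat.eq_zero_or_pos b with hb | hb
  · subst hb
    simp only [Nat.cast_zero, add_zero, pow_zero, mul_one]
    have : ((a:ℝ)/(a:ℝ)) = 1 := by rw [div_self]; positivity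
    rw [this, one_pow]
    exact pow_le_one₀ h1p (by linarith)
  -- main case
  have ha' : (0:ℝ) < a := by exact_mod_cast ha
  have hb' : (0:ℝ) < b := by exact_mod_cast hb
  set n : ℝ := (a:ℝ) + b with hn
  have hn' : 0 < n := by positivity
  set w1 : ℝ := (a:ℝ) / n with hw1
  set w2 : ℝ := (b:ℝ) / n with hw2
  have hw1p : 0 < w1 := by positivity
  have hw2p : 0 < w2 := by positivity
  have hwsum : w1 + w2 = 1 := by
    rw [hw1, hw2, ← add_div, div_self hn'.ne']
  have key : ((1-p)/w1) ^ w1 * (p/w2) ^ w2 ≤ 1 := by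
    have := Real.geom_mean_le_arith_mean2_weighted hw1p.le hw2p.le
      (div_nonneg h1p hw1p.le) (div_nonneg hp hw2p.le) hwsum
    calc ((1-p)/w1) ^ w1 * (p/w2) ^ w2 ≤ w1 * ((1-p)/w1) + w2 * (p/w2) := this
      _ = 1 := by field_simp; ring
  have key2 : (1-p) ^ w1 * p ^ w2 ≤ w1 ^ w1 * w2 ^ w2 := by
    rw [Real.div_rpow h1p hw1p.le, Real.div_rpow hp hw2p.le, div_mul_div_comm,
      div_le_one (by positivity)] at key
    linarith
  have hmono := Real.rpow_le_rpow (by positivity) key2 hn'.le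
  have expand : ∀ x y : ℝ, 0 ≤ x → 0 ≤ y →
      (x ^ w1 * y ^ w2) ^ n = x ^ a * y ^ b := by
    intro x y hx hy
    rw [Real.mul_rpow (by positivity) (by positivity),
      ← Real.rpow_natCast x a, ← Real.rpow_natCast y b,
      ← Real.rpow_mul hx, ← Real.rpow_mul hy]
    congr 1
    · congr 1; rw [hw1]; field_simp
    · congr 1; rw [hw2]; field_simp
  rw [expand _ _ h1p hp, expand _ _ hw1p.le hw2p.le] at hmono
  exact hmono

theorem stmt_0 (N00 N01 N10 N11 : ℕ)
    (hmono : N01 * N10 ≤ N00 * N11)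
    (hd1 : 0 < N10 + N11) (hd2 : 0 < N00 + N01) :
    ∀ p00 p11 : ℝ, 0 ≤ p00 → 0 ≤ p11 → p00 + p11 ≤ 1 →
      (1 - p11) ^ N00 * p11 ^ N01 * p00 ^ N10 * (1 - p00) ^ N11 ≤
        (1 - (N01 : ℝ) / (N00 + N01)) ^ N00 * ((N01 : ℝ) / (N00 + N01)) ^ N01 *
          ((N10 : ℝ) / (N10 + N11)) ^ N10 * (1 - (N10 : ℝ) / (N10 + N11)) ^ N11 := by
  intro p00 p11 h00 h11 hsum
  have hd1' : (0:ℝ) < (N10:ℝ) + N11 := by exact_mod_cast hd1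
  have hd2' : (0:ℝ) < (N00:ℝ) + N01 := by exact_mod_cast hd2
  have e1 : 1 - (N01 : ℝ) / (N00 + N01) = (N00 : ℝ) / (N00 + N01) := by field_simp; ring
  have e2 : 1 - (N10 : ℝ) / (N10 + N11) = (N11 : ℝ) / (N10 + N11) := by field_simp; ring
  rw [e1, e2]
  have A := bern_max N00 N01 p11 h11 (by linarith)
  have B := bern_max N11 N10 p00 h00 (by linarith)
  have hB' : p00 ^ N10 * (1 - p00) ^ N11 ≤
      ((N10:ℝ)/(N10+N11)) ^ N10 * ((N11:ℝ)/(N10+N11)) ^ N11 := by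
    have := B
    rw [add_comm (N11:ℝ) (N10:ℝ)] at this
    linarith [this, mul_comm ((1 - p00) ^ N11) (p00 ^ N10),
      mul_comm (((N11:ℝ)/(N10+N11)) ^ N11) (((N10:ℝ)/(N10+N11)) ^ N10)]
  calc (1 - p11) ^ N00 * p11 ^ N01 * p00 ^ N10 * (1 - p00) ^ N11
      = ((1 - p11) ^ N00 * p11 ^ N01) * (p00 ^ N10 * (1 - p00) ^ N11) := by ring
    _ ≤ (((N00:ℝ)/(N00+N01)) ^ N00 * ((N01:ℝ)/(N00+N01)) ^ N01) *
        (((N10:ℝ)/(N10+N11)) ^ N10 * ((N11:ℝ)/(N10+N11)) ^ N11) := by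
        exact mul_le_mul A hB' (mul_nonneg (pow_nonneg h00 _) (pow_nonneg (by linarith) _)) (by positivity)
    _ = ((N00:ℝ)/(N00+N01)) ^ N00 * ((N01:ℝ)/(N00+N01)) ^ N01 *
        ((N10:ℝ)/(N10+N11)) ^ N10 * ((N11:ℝ)/(N10+N11)) ^ N11 := by ring
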